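/- Let P_1, ..., P_T be orthogonal projections on R^d and M = P_T⋯P_1. Then for any v in R^d, ||(I - M)v||^2 ≤ T(||v||^2 - ||Mv||^2). -/

import Mathlib

/-- The product `P (n-1) * ⋯ * P 0` (so that `P 0` is applied first). -/
noncomputable def prodUpTo (d : ℕ)
    (P : ℕ → (EuclideanSpace ℝ (Fin d) →L[ℝ] EuclideanSpace ℝ (Fin d))) :
    ℕ → (EuclideanSpace ℝ (Fin d) →L[ℝ] EuclideanSpace ℝ (Fin d))
  | 0 => 1
  | n + 1 => P n * prodUpTo d P n

lemma proj_pyth {d : ℕ} (Q : EuclideanSpace ℝ (Fin d) →L[ℝ] EuclideanSpace ℝ (Fin d))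
    (hsa : IsSelfAdjoint Q) (hid : Q * Q = Q) (x : EuclideanSpace ℝ (Fin d)) :
    ‖x - Q x‖ ^ 2 = ‖x‖ ^ 2 - ‖Q x‖ ^ 2 := by
  have hsym := (ContinuousLinearMap.isSelfAdjoint_iff_isSymmetric.mp hsa)
  have h1 : inner ℝ x (Q x) = (‖Q x‖ : ℝ) ^ 2 := by
    have : Q (Q x) = Q x := by
      have := congrArg (fun f => f x) hid
      simpa using this
    calc inner ℝ x (Q x) = inner ℝ x (Q (Q x)) := by rw [this]
      _ = inner ℝ (Q x) (Q x) := (hsym x (Q x)).symm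
      _ = (‖Q x‖ : ℝ) ^ 2 := by rw [real_inner_self_eq_norm_sq]
  have := @norm_sub_sq_real (EuclideanSpace ℝ (Fin d)) _ _ x (Q x)
  rw [this, h1]; ring

theorem one_cycle_residual_bound (d T : ℕ)
    (P : ℕ → (EuclideanSpace ℝ (Fin d) →L[ℝ] EuclideanSpace ℝ (Fin d)))
    (hsa : ∀ i < T, IsSelfAdjoint (P i)) (hidem : ∀ i < T, P i * P i = P i)
    (v : EuclideanSpace ℝ (Fin d)) :
    ‖((1 : EuclideanSpace ℝ (Fin d) →L[ℝ] EuclideanSpace ℝ (Fin d)) - prodUpTo d P T) v‖ ^ 2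
      ≤ (T : ℝ) * (‖v‖ ^ 2 - ‖prodUpTo d P T v‖ ^ 2) := by
  set M := fun n => prodUpTo d P n v with hM
  have hstep : ∀ n, M (n + 1) = P n (M n) := fun n => rfl
  -- decomposition
  have hdecomp : ((1 : EuclideanSpace ℝ (Fin d) →L[ℝ] EuclideanSpace ℝ (Fin d))
      - prodUpTo d P T) v = ∑ n ∈ Finset.range T, (M n - M (n + 1)) := by
    have := Finset.sum_range_sub' (fun n => M n) T
    simp only [ContinuousLinearMap.sub_apply, ContinuousLinearMap.one_apply]
    rw [this]
    simp [hM, prodUpTo]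
  rw [hdecomp]
  -- pythagoras each step
  have hpyth : ∀ n < T, ‖M n - M (n + 1)‖ ^ 2 = ‖M n‖ ^ 2 - ‖M (n + 1)‖ ^ 2 := by
    intro n hn
    rw [hstep n]
    exact proj_pyth (P n) (hsa n hn) (hidem n hn) (M n)
  -- telescoping sum of squares
  have htel : ∑ n ∈ Finset.range T, (‖M n‖ ^ 2 - ‖M (n + 1)‖ ^ 2)
      = ‖v‖ ^ 2 - ‖prodUpTo d P T v‖ ^ 2 := by
    have := Finset.sum_range_sub' (fun n => (‖M n‖ : ℝ) ^ 2) T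
    rw [this]
    simp [hM, prodUpTo]
  calc ‖∑ n ∈ Finset.range T, (M n - M (n + 1))‖ ^ 2
      ≤ (∑ n ∈ Finset.range T, ‖M n - M (n + 1)‖) ^ 2 := by
        have := norm_sum_le (Finset.range T) (fun n => M n - M (n + 1))
        exact pow_le_pow_left₀ (norm_nonneg _) this 2
    _ ≤ (Finset.range T).card * ∑ n ∈ Finset.range T, ‖M n - M (n + 1)‖ ^ 2 :=
        sq_sum_le_card_mul_sum_sq
    _ = (T : ℝ) * ∑ n ∈ Finset.range T, ‖M n - M (n + 1)‖ ^ 2 := by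
        rw [Finset.card_range]
    _ = (T : ℝ) * ∑ n ∈ Finset.range T, (‖M n‖ ^ 2 - ‖M (n + 1)‖ ^ 2) := by
        congr 1
        exact Finset.sum_congr rfl fun n hn => hpyth n (Finset.mem_range.mp hn)
    _ = (T : ℝ) * (‖v‖ ^ 2 - ‖prodUpTo d P T v‖ ^ 2) := by rw [htel]
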